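/- Let A be a left R-module with a projective resolution by finitely generated modules, and 0 → Y′ → Y → Y″ → 0 a pure exact sequence of left R-modules with Ext¹_R(A, Y) = 0. Then Ext¹_R(A, Y″) = 0, i.e., A^⊥ is closed under pure quotients over a left-coherent ring. -/

import Mathlib

universe u

open TensorProduct CategoryTheory DirectSum

noncomputable section

/-- The submodule of relations presenting the tensor product `Q ⊗_R M` as a quotient of
`Q ⊗_ℤ M`, for a right `R`-module `Q` and a left `R`-module `M`. -/
def tensorRelations (R : Type u) [Ring R] (Q : Type u) [AddCommGroup Q] [Module Rᵐᵒᵖ Q]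
    (M : Type u) [AddCommGroup M] [Module R M] : Submodule ℤ (TensorProduct ℤ Q M) :=
  Submodule.span ℤ
    {x | ∃ (q : Q) (r : R) (m : M), x = (MulOpposite.op r • q) ⊗ₜ[ℤ] m - q ⊗ₜ[ℤ] (r • m)}

/-- The map `Q ⊗_R M → Q ⊗_R N` induced by `f` is injective, where `Q ⊗_R -` is realized
as the quotient of `Q ⊗_ℤ -` by `tensorRelations`. -/
def StaysInjective (R : Type u) [Ring R] (Q : Type u) [AddCommGroup Q] [Module Rᵐᵒᵖ Q]
    {M N : Type u} [AddCommGroup M] [Module R M] [AddCommGroup N] [Module R N]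
    (f : M →ₗ[R] N) : Prop :=
  ∀ z : TensorProduct ℤ Q M,
    LinearMap.lTensor Q f.toAddMonoidHom.toIntLinearMap z ∈ tensorRelations R Q N →
      z ∈ tensorRelations R Q M

/-- `f` is a pure monomorphism of left `R`-modules: it is injective and stays injective
after tensoring with every right `R`-module. -/
def IsPureMono (R : Type u) [Ring R] {M N : Type u} [AddCommGroup M] [Module R M]
    [AddCommGroup N] [Module R N] (f : M →ₗ[R] N) : Prop :=
  Function.Injective f ∧
    ∀ (Q : Type u) [AddCommGroup Q] [Module Rᵐᵒᵖ Q], StaysInjective R Q f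

/-- `N` is a pure submodule of `M`. -/
def IsPureSubmodule (R : Type u) [Ring R] {M : Type u} [AddCommGroup M] [Module R M]
    (N : Submodule R M) : Prop :=
  IsPureMono R N.subtype

/-- `0 → M' → M → M'' → 0` is a pure exact sequence of left `R`-modules. -/
def IsPureExactSeq (R : Type u) [Ring R] {M' M M'' : Type u}
    [AddCommGroup M'] [Module R M'] [AddCommGroup M] [Module R M]
    [AddCommGroup M''] [Module R M'']
    (f : M' →ₗ[R] M) (g : M →ₗ[R] M'') : Prop :=
  Function.Surjective g ∧ Function.Exact f g ∧ IsPureMono R f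

/-- `Ext¹_R(M, N) = 0`, phrased via the `Ext` bifunctor on the category of
left `R`-modules. -/
def Ext1Zero (R : Type u) [Ring R] (M N : Type u) [AddCommGroup M] [Module R M]
    [AddCommGroup N] [Module R N] : Prop :=
  Subsingleton (((Ext ℤ (ModuleCat.{u} R) 1).obj (Opposite.op (ModuleCat.of R M))).obj
    (ModuleCat.of R N))

universe v

open CategoryTheory.Limits

section Pure
variable {R : Type u} [Ring R] {Y' Y : Type u} [AddCommGroup Y'] [Module R Y']
  [AddCommGroup Y] [Module R Y]

lemma pure_equations (f : Y' →ₗ[R] Y) (hf : IsPureMono R f) {m n : ℕ}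
    (r : Fin m → Fin n → R) (z : Fin m → Y') (y : Fin n → Y)
    (hz : ∀ j, f (z j) = ∑ i, r j i • y i) :
    ∃ w : Fin n → Y', ∀ j, z j = ∑ i, r j i • w i := by
  classical
  set M₀ : Type u := Fin m → R with hM₀
  set c : Fin n → M₀ := fun i j => r j i with hc
  set K : Submodule Rᵐᵒᵖ M₀ := Submodule.span Rᵐᵒᵖ (Set.range c) with hK
  set Q : Type u := M₀ ⧸ K with hQ
  set e : Fin m → Q := fun j => Submodule.Quotient.mk (Pi.single j (1 : R)) with he
  set zt : TensorProduct ℤ Q Y' := ∑ j, e j ⊗ₜ[ℤ] z j with hzt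
  -- Step 1 : image of zt lies in the relations of Q ⊗ Y
  have hcol : ∀ i : Fin n, (∑ j, MulOpposite.op (r j i) • e j) = 0 := by
    intro i
    have h1 : (∑ j, MulOpposite.op (r j i) • Pi.single j (1 : R)) = c i := by
      funext j'
      simp [Pi.single_apply, MulOpposite.smul_eq_mul_unop, hc]
    have h2 : (∑ j, MulOpposite.op (r j i) • e j)
        = Submodule.Quotient.mk (∑ j, MulOpposite.op (r j i) • Pi.single j (1 : R)) := by
      show ∑ j, MulOpposite.op (r j i) • K.mkQ (Pi.single j 1) = K.mkQ _
      simp_rw [← map_smul, ← map_sum]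
    rw [h2, h1, Submodule.Quotient.mk_eq_zero]
    exact Submodule.subset_span ⟨i, rfl⟩
  have hmem : LinearMap.lTensor Q f.toAddMonoidHom.toIntLinearMap zt
      ∈ tensorRelations R Q Y := by
    have h0 : LinearMap.lTensor Q f.toAddMonoidHom.toIntLinearMap zt
        = ∑ j, ∑ i, e j ⊗ₜ[ℤ] (r j i • y i) := by
      rw [hzt, map_sum]
      refine Finset.sum_congr rfl fun j _ => ?_
      rw [LinearMap.lTensor_tmul]
      show e j ⊗ₜ[ℤ] (f (z j)) = _
      rw [hz j, tmul_sum]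
    rw [h0]
    have hz0 : ∑ j, ∑ i, (MulOpposite.op (r j i) • e j) ⊗ₜ[ℤ] y i = 0 := by
      rw [Finset.sum_comm]
      refine Finset.sum_eq_zero fun i _ => ?_
      rw [← sum_tmul, hcol i, zero_tmul]
    have key : ∑ j, ∑ i, e j ⊗ₜ[ℤ] (r j i • y i)
        = ∑ j, ∑ i, (e j ⊗ₜ[ℤ] (r j i • y i)
            - (MulOpposite.op (r j i) • e j) ⊗ₜ[ℤ] y i) := by
      simp only [Finset.sum_sub_distrib, hz0, sub_zero]
    rw [key]
    refine Submodule.sum_mem _ fun j _ => Submodule.sum_mem _ fun i _ => ?_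
    have hgen : ((MulOpposite.op (r j i) • e j) ⊗ₜ[ℤ] y i - e j ⊗ₜ[ℤ] (r j i • y i))
        ∈ tensorRelations R Q Y :=
      Submodule.subset_span ⟨e j, r j i, y i, rfl⟩
    simpa [neg_sub] using Submodule.neg_mem _ hgen
  -- Step 2 : purity
  have hzt' : zt ∈ tensorRelations R Q Y' := hf.2 Q zt hmem
  -- Step 3 : the evaluation map Φ
  set L : (Fin n → Y') →ₗ[ℤ] (Fin m → Y') :=
    { toFun := fun w j => ∑ i, r j i • w i
      map_add' := by
        intro w w'
        funext j
        simp [smul_add, Finset.sum_add_distrib]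
      map_smul' := by
        intro k w
        funext j
        simp [Finset.smul_sum, smul_comm (r j _) k] } with hL
  set U : Submodule ℤ (Fin m → Y') := LinearMap.range L with hU
  set T : Type u := (Fin m → Y') ⧸ U with hT
  set B : M₀ →ₗ[ℤ] (Y' →ₗ[ℤ] T) :=
    { toFun := fun a =>
        { toFun := fun v => Submodule.Quotient.mk (fun j => a j • v)
          map_add' := by
            intro v v'
            show Submodule.Quotient.mk _ = Submodule.Quotient.mk _ + Submodule.Quotient.mk _
            rw [← Submodule.Quotient.mk_add]
            congr 1
            funext j
            show a j • (v + v') = a j • v + a j • v'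
            rw [smul_add]
          map_smul' := by
            intro k v
            show Submodule.Quotient.mk _ = k • Submodule.Quotient.mk _
            rw [← Submodule.Quotient.mk_smul]
            congr 1
            funext j
            show a j • (k • v) = k • (a j • v)
            rw [smul_comm] }
      map_add' := by
        intro a a'
        ext v
        show Submodule.Quotient.mk (p := U) _ = Submodule.Quotient.mk (p := U) _ + Submodule.Quotient.mk (p := U) _
        rw [← Submodule.Quotient.mk_add]
        congr 1
        funext j
        show (a j + a' j) • v = a j • v + a' j • v
        rw [add_smul]
      map_smul' := by
        intro k a
        ext v
        show Submodule.Quotient.mk (p := U) _ = k • Submodule.Quotient.mk (p := U) _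
        rw [← Submodule.Quotient.mk_smul]
        congr 1
        funext j
        show ((k • a) j) • v = (k • (a j • v))
        rw [Pi.smul_apply, smul_assoc] } with hB
  have hBK : Submodule.restrictScalars ℤ K ≤ LinearMap.ker B := by
    intro a ha
    rw [Submodule.restrictScalars_mem] at ha
    rw [LinearMap.mem_ker]
    induction ha using Submodule.span_induction with
    | mem x hx =>
      obtain ⟨i, rfl⟩ := hx
      ext v
      show Submodule.Quotient.mk (fun j => c i j • v) = 0
      rw [Submodule.Quotient.mk_eq_zero]
      exact ⟨Pi.single i v, by
        funext j
        show ∑ i', r j i' • Pi.single i v i' = r j i • v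
        rw [Finset.sum_eq_single i]
        · simp
        · intro i' _ hne
          simp [Pi.single_eq_of_ne hne]
        · simp⟩
    | zero => simp
    | add x y hx hy ihx ihy => rw [map_add, ihx, ihy, add_zero]
    | smul s x hx ih =>
      ext v
      show Submodule.Quotient.mk (fun j => (s • x) j • v) = 0
      have : (fun j => (s • x) j • v) = (fun j => x j • (s.unop • v)) := by
        funext j
        show ((x j) * s.unop) • v = x j • (s.unop • v)
        rw [mul_smul]
      rw [this]
      have := congrArg (fun F => F (s.unop • v)) ih
      exact this
  set b : Q →ₗ[ℤ] (Y' →ₗ[ℤ] T) :=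
    (Submodule.liftQ (Submodule.restrictScalars ℤ K) B hBK).comp
      (Submodule.Quotient.restrictScalarsEquiv ℤ K).symm.toLinearMap with hb
  have hbmk : ∀ a : M₀, b (Submodule.Quotient.mk a) = B a := by
    intro a
    show  (Submodule.liftQ _ B hBK)
      ((Submodule.Quotient.restrictScalarsEquiv ℤ K).symm (Submodule.Quotient.mk a)) = B a
    rw [Submodule.Quotient.restrictScalarsEquiv_symm_mk, Submodule.liftQ_apply]
  set Φ : TensorProduct ℤ Q Y' →ₗ[ℤ] T := TensorProduct.lift b with hΦ
  -- Step 4 : Φ kills the relations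
  have hΦrel : ∀ x ∈ tensorRelations R Q Y', Φ x = 0 := by
    intro x hx
    induction hx using Submodule.span_induction with
    | mem x hx =>
      obtain ⟨q, t, v, rfl⟩ := hx
      obtain ⟨a, rfl⟩ := Submodule.Quotient.mk_surjective K q
      rw [map_sub]
      have h1 : (MulOpposite.op t • Submodule.Quotient.mk a : Q)
          = Submodule.Quotient.mk (MulOpposite.op t • a) := rfl
      rw [h1]
      show Φ ((Submodule.Quotient.mk (MulOpposite.op t • a) : Q) ⊗ₜ[ℤ] v)
          - Φ ((Submodule.Quotient.mk a : Q) ⊗ₜ[ℤ] (t • v)) = 0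
      rw [hΦ]; erw [TensorProduct.lift.tmul, TensorProduct.lift.tmul]; rw [hbmk, hbmk]
      show Submodule.Quotient.mk (fun j => (MulOpposite.op t • a) j • v)
          - Submodule.Quotient.mk (fun j => a j • (t • v)) = 0
      rw [sub_eq_zero]
      congr 1
      funext j
      show ((a j) * t) • v = a j • (t • v)
      rw [mul_smul]
    | zero => simp
    | add x y hx hy ihx ihy => rw [map_add, ihx, ihy, add_zero]
    | smul s x hx ih => rw [map_smul, ih, smul_zero]
  -- Step 5 : evaluate Φ at zt
  have hev : Φ zt = Submodule.Quotient.mk z := by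
    rw [hzt, map_sum]
    have h1 : ∀ j, Φ (e j ⊗ₜ[ℤ] z j)
        = U.mkQ (fun j' => (Pi.single j (1 : R) : Fin m → R) j' • z j) := by
      intro j
      rw [hΦ]; show b (e j) (z j) = _
      rw [he]
      rw [hbmk]
      rfl
    simp_rw [h1]
    rw [← map_sum]
    show U.mkQ _ = U.mkQ z
    congr 1
    funext j'
    rw [Finset.sum_apply]
    rw [Finset.sum_eq_single j']
    · simp
    · intro j _ hne
      simp [Pi.single_eq_of_ne (Ne.symm hne)]
    · simp
  have := hΦrel zt hzt'
  rw [hev] at this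
  rw [Submodule.Quotient.mk_eq_zero] at this
  obtain ⟨w, hw⟩ := this
  refine ⟨w, fun j => ?_⟩
  have := congrFun hw j
  exact this.symm

end Pure

lemma modcat_isZero_iff {S : Type v} [Ring S] (M : ModuleCat.{u} S) :
    IsZero M ↔ Subsingleton M := by
  constructor
  · intro h
    constructor
    intro a b
    have h0 : (𝟙 M : M ⟶ M) = 0 := h.eq_of_src _ _
    have hx : ∀ x : M, x = (0 : M ⟶ M) x := by
      intro x
      conv_lhs => rw [show x = (𝟙 M : M ⟶ M) x from rfl, h0]
    rw [hx a, hx b]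
    rfl
  · intro h; exact ModuleCat.isZero_of_subsingleton _


lemma ext1zero_iff (R : Type u) [Ring R] (A : Type u) [AddCommGroup A] [Module R A]
    (P : ProjectiveResolution (ModuleCat.of R A))
    (N : Type u) [AddCommGroup N] [Module R N] :
    Ext1Zero R A N ↔
    ∀ φ : P.complex.X 1 ⟶ ModuleCat.of R N, P.complex.d 2 1 ≫ φ = 0 →
      ∃ χ : P.complex.X 0 ⟶ ModuleCat.of R N, P.complex.d 1 0 ≫ χ = φ := by
  rw [Ext1Zero, ← modcat_isZero_iff]
  rw [(P.isoExt (R := ℤ) 1 (ModuleCat.of R N)).isZero_iff]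
  rw [← HomologicalComplex.exactAt_iff_isZero_homology]
  rw [HomologicalComplex.exactAt_iff' _ (i := 0) (j := 1) (k := 2) (by simp) (by simp)]
  rw [ShortComplex.moduleCat_exact_iff]
  constructor
  · intro h φ hφ
    obtain ⟨χ, hχ⟩ := h φ hφ
    exact ⟨χ, hχ⟩
  · intro h φ hφ
    obtain ⟨χ, hχ⟩ := h φ hφ
    exact ⟨χ, hχ⟩

/-- If the left `R`-module `A` admits a projective resolution consisting of finitely
generated modules, and `0 → Y' → Y → Y'' → 0` is a pure exact sequence with
`Ext¹(A, Y) = 0`, then `Ext¹(A, Y'') = 0`: the class `A^⊥` is closed under pure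
quotients. -/
theorem stmt14 (R : Type u) [Ring R] (A : Type u) [AddCommGroup A] [Module R A]
    (P : ProjectiveResolution (ModuleCat.of R A))
    (hfin : ∀ n : ℕ, Module.Finite R (P.complex.X n))
    (Y' Y Y'' : Type u) [AddCommGroup Y'] [Module R Y'] [AddCommGroup Y] [Module R Y]
    [AddCommGroup Y''] [Module R Y'']
    (f : Y' →ₗ[R] Y) (g : Y →ₗ[R] Y'') (hpure : IsPureExactSeq R f g)
    (hY : Ext1Zero R A Y) :
    Ext1Zero R A Y'' := by
  classical
  obtain ⟨gsur, hex, hpm⟩ := hpure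
  rw [ext1zero_iff R A P] at hY ⊢
  intro φ hφ
  haveI h1fin := hfin 1
  haveI h2fin := hfin 2
  haveI hproj1 : Module.Projective R (P.complex.X 1) :=
    (IsProjective.iff_projective.{u, u} (R := R) (P.complex.X 1)).mpr (P.projective 1)
  obtain ⟨m, p, hp⟩ := Module.Finite.exists_fin (R := R) (M := P.complex.X 2)
  obtain ⟨n, t, ht⟩ := Module.Finite.exists_fin (R := R) (M := P.complex.X 1)
  set π : (Fin n → R) →ₗ[R] P.complex.X 1 :=
    { toFun := fun v => ∑ i, v i • t i
      map_add' := by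
        intro v v'
        show ∑ i, (v i + v' i) • t i = _
        simp [add_smul, Finset.sum_add_distrib]
      map_smul' := by
        intro c v
        show ∑ i, (c * v i) • t i = c • ∑ i, v i • t i
        rw [Finset.smul_sum]
        simp [mul_smul] } with hπdef
  have hπ : Function.Surjective π := by
    rw [← LinearMap.range_eq_top]
    rw [eq_top_iff, ← ht, Submodule.span_le]
    rintro x ⟨i, rfl⟩
    refine ⟨Pi.single i 1, ?_⟩
    show ∑ i', (Pi.single i (1 : R) : Fin n → R) i' • t i' = t i
    rw [Finset.sum_eq_single i]
    · simp
    · intro i' _ hne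
      simp [Pi.single_eq_of_ne hne]
    · simp
  obtain ⟨s, hs⟩ := Module.projective_lifting_property π LinearMap.id hπ
  obtain ⟨ψ₀, hψ₀⟩ := Module.projective_lifting_property g
    (show ↥(P.complex.X 1) →ₗ[R] Y'' from φ.hom) gsur
  have hgz : ∀ j : Fin m, g (ψ₀ (P.complex.d 2 1 (p j))) = 0 := by
    intro j
    have h1 : g (ψ₀ (P.complex.d 2 1 (p j))) = φ (P.complex.d 2 1 (p j)) := by
      exact LinearMap.congr_fun hψ₀ _
    rw [h1]
    exact LinearMap.congr_fun (congrArg ModuleCat.Hom.hom hφ) (p j)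
  choose z hz using fun j => (hex _).mp (hgz j)
  set r : Fin m → Fin n → R := fun j i => s (P.complex.d 2 1 (p j)) i with hrdef
  set y : Fin n → Y := fun i => ψ₀ (t i) with hydef
  have heq : ∀ j, f (z j) = ∑ i, r j i • y i := by
    intro j
    rw [hz j]
    have h2 : π (s (P.complex.d 2 1 (p j))) = P.complex.d 2 1 (p j) :=
      LinearMap.congr_fun hs _
    conv_lhs => rw [← h2]
    show ψ₀ (∑ i, r j i • t i) = ∑ i, r j i • y i
    rw [map_sum]
    simp [hydef]
  obtain ⟨w, hw⟩ := pure_equations f hpm r z y heq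
  set Lw : (Fin n → R) →ₗ[R] Y' :=
    { toFun := fun v => ∑ i, v i • w i
      map_add' := by
        intro v v'
        show ∑ i, (v i + v' i) • w i = _
        simp [add_smul, Finset.sum_add_distrib]
      map_smul' := by
        intro c v
        show ∑ i, (c * v i) • w i = c • ∑ i, v i • w i
        rw [Finset.smul_sum]
        simp [mul_smul] } with hLwdef
  set ψ : ↥(P.complex.X 1) →ₗ[R] Y := ψ₀ - (f ∘ₗ Lw ∘ₗ s) with hψdef
  have hψd : (ψ ∘ₗ (show ↥(P.complex.X 2) →ₗ[R] ↥(P.complex.X 1) from (P.complex.d 2 1).hom))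
      = 0 := by
    apply LinearMap.ext_on hp
    rintro x ⟨j, rfl⟩
    show ψ (P.complex.d 2 1 (p j)) = 0
    rw [hψdef]
    show ψ₀ (P.complex.d 2 1 (p j)) - f (Lw (s (P.complex.d 2 1 (p j)))) = 0
    have hLws : Lw (s (P.complex.d 2 1 (p j))) = ∑ i, r j i • w i := rfl
    rw [hLws, ← hw j, ← hz j, sub_self]
  have hc : P.complex.d 2 1 ≫ (show P.complex.X 1 ⟶ ModuleCat.of R Y from ModuleCat.ofHom ψ) = 0 := by
    apply ModuleCat.hom_ext
    apply LinearMap.ext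
    intro x
    exact LinearMap.congr_fun hψd x
  obtain ⟨χ, hχ⟩ := hY (show P.complex.X 1 ⟶ ModuleCat.of R Y from ModuleCat.ofHom ψ) hc
  refine ⟨χ ≫ ModuleCat.ofHom g, ?_⟩
  rw [← Category.assoc, hχ]
  apply ModuleCat.hom_ext
  apply LinearMap.ext
  intro x
  show g (ψ x) = φ x
  rw [hψdef]
  have h3 : ψ₀ x - (f ∘ₗ Lw ∘ₗ s) x = ψ₀ x - f (Lw (s x)) := rfl
  show g (ψ₀ x - f (Lw (s x))) = φ x
  rw [map_sub]
  have h4 : g (f (Lw (s x))) = 0 := (hex _).mpr ⟨_, rfl⟩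
  rw [h4, sub_zero]
  exact LinearMap.congr_fun hψ₀ x

end
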